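/- Let ρ_AB be a pure bipartite density operator on a finite-dimensional Hilbert space A⊗B. Then the mutual information variance equals four times the varentropy of the reduced state: V(ρ_AB ‖ ρ_A ⊗ ρ_B) = 4·V(A)_ρ, where V(A)_ρ = Tr(ρ_A (log ρ_A)²) − (S(A)_ρ)² and S(A)_ρ = −Tr(ρ_A log ρ_A). -/

import Mathlib

open Matrix Filter
open scoped ComplexOrder Classical Kronecker

variable {n : Type*} [Fintype n] [DecidableEq n]

/-- Square root of a positive semidefinite matrix (0 if not PSD). -/
noncomputable def msqrt (A : Matrix n n ℂ) : Matrix n n ℂ :=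
  if h : A.PosSemidef then (h.1.eigenvectorUnitary : Matrix n n ℂ) *
    diagonal (((↑) : ℝ → ℂ) ∘ Real.sqrt ∘ h.1.eigenvalues) *
    (star h.1.eigenvectorUnitary : Matrix n n ℂ) else 0

/-- Trace norm ‖A‖₁ = Tr √(AᴴA). -/
noncomputable def traceNorm (A : Matrix n n ℂ) : ℝ :=
  ((msqrt (Aᴴ * A)).trace).re

/-- Fidelity F(ρ,σ) = ‖√ρ √σ‖₁. -/
noncomputable def fidelity (ρ σ : Matrix n n ℂ) : ℝ :=
  traceNorm (msqrt ρ * msqrt σ)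

/-- Purified distance for normalized states. -/
noncomputable def purifiedDist (ρ σ : Matrix n n ℂ) : ℝ :=
  Real.sqrt (1 - (fidelity ρ σ) ^ 2)

/-- Density operator predicate. -/
def IsDensity (ρ : Matrix n n ℂ) : Prop := ρ.PosSemidef ∧ ρ.trace = 1

/-- Subnormalized state predicate. -/
def IsSubnormalized (ρ : Matrix n n ℂ) : Prop := ρ.PosSemidef ∧ ρ.trace.re ≤ 1

/-- Generalized fidelity for subnormalized states. -/
noncomputable def genFidelity (ρ σ : Matrix n n ℂ) : ℝ :=
  traceNorm (msqrt ρ * msqrt σ) + Real.sqrt ((1 - ρ.trace.re) * (1 - σ.trace.re))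

/-- Purified distance via the generalized fidelity. -/
noncomputable def purifiedDistG (ρ σ : Matrix n n ℂ) : ℝ :=
  Real.sqrt (1 - (genFidelity ρ σ) ^ 2)

/-- Max-relative entropy (base 2). -/
noncomputable def Dmax (ρ σ : Matrix n n ℂ) : ℝ :=
  sInf {l : ℝ | ((2:ℝ) ^ l • σ - ρ).PosSemidef}

/-- Min-relative entropy (base 2). -/
noncomputable def Dmin (ρ σ : Matrix n n ℂ) : ℝ :=
  -Real.logb 2 ((fidelity ρ σ) ^ 2)

/-- ε-ball of subnormalized states around ρ in purified distance. -/
def epsBall (ε : ℝ) (ρ : Matrix n n ℂ) : Set (Matrix n n ℂ) :=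
  {ρ' | IsSubnormalized ρ' ∧ purifiedDistG ρ ρ' ≤ ε}

/-- Matrix logarithm via the hermitian functional calculus (0 if not Hermitian). -/
noncomputable def mlog (A : Matrix n n ℂ) : Matrix n n ℂ :=
  if h : A.IsHermitian then h.cfc Real.log else 0

/-- Quantum relative entropy D(ρ‖σ) = Tr ρ(log ρ − log σ). -/
noncomputable def relEnt (ρ σ : Matrix n n ℂ) : ℝ :=
  ((ρ * (mlog ρ - mlog σ)).trace).re

/-- Relative entropy variance V(ρ‖σ). -/
noncomputable def relVar (ρ σ : Matrix n n ℂ) : ℝ :=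
  ((ρ * (mlog ρ - mlog σ) ^ 2).trace).re - (relEnt ρ σ) ^ 2

/-- Varentropy V(A)_ρ = Tr(ρ (log ρ)²) − (Tr ρ log ρ)². -/
noncomputable def varentropy (ρ : Matrix n n ℂ) : ℝ :=
  ((ρ * (mlog ρ) ^ 2).trace).re - (((ρ * mlog ρ).trace).re) ^ 2

/-- Partial trace over the second (B) register. -/
noncomputable def ptraceB {A B : Type*} [Fintype A] [Fintype B]
    (M : Matrix (A × B) (A × B) ℂ) : Matrix A A ℂ :=
  Matrix.of fun a a' => ∑ b, M (a, b) (a', b)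

/-- Partial trace over the first (A) register. -/
noncomputable def ptraceA {A B : Type*} [Fintype A] [Fintype B]
    (M : Matrix (A × B) (A × B) ℂ) : Matrix B B ℂ :=
  Matrix.of fun b b' => ∑ a, M (a, b) (a, b')

namespace Stmt6Aux

open Polynomial

noncomputable def sgn (x : ℝ) : ℝ := if x = 0 then 0 else 1

lemma sgn_mul_log (x : ℝ) : sgn x * Real.log x = Real.log x := by
  unfold sgn
  by_cases hx : x = 0 <;> simp [hx]

lemma mul_sgn (x : ℝ) : x * sgn x = x := by
  unfold sgn; by_cases hx : x = 0 <;> simp [hx]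

lemma log_mul_sgn (x y : ℝ) : Real.log (x * y) = Real.log x * sgn y + sgn x * Real.log y := by
  unfold sgn
  by_cases hx : x = 0
  · simp [hx]
  by_cases hy : y = 0
  · simp [hy]
  simp [hx, hy, Real.log_mul hx hy]

variable {m : Type*} [Fintype m] [DecidableEq m]

lemma exists_interp (s : Finset ℝ) (f : ℝ → ℝ) : ∃ p : ℝ[X], ∀ x ∈ s, p.eval x = f x :=
  ⟨Lagrange.interpolate s id f, fun x hx =>
    Lagrange.eval_interpolate_at_node (v := id) (r := f) (fun _ _ _ _ h => h) hx⟩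

/-- conjugation by a unitary as an ℝ-algebra hom -/
noncomputable def conjAH (U : Matrix m m ℂ) (hU : U ∈ Matrix.unitaryGroup m ℂ) :
    Matrix m m ℂ →ₐ[ℝ] Matrix m m ℂ where
  toFun X := U * X * star U
  map_one' := by
    show U * 1 * star U = 1
    rw [mul_one]; exact Matrix.mem_unitaryGroup_iff.mp hU
  map_mul' X Y := by
    show U * (X * Y) * star U = (U * X * star U) * (U * Y * star U)
    have h : star U * U = 1 := Matrix.mem_unitaryGroup_iff'.mp hU
    simp only [mul_assoc]
    rw [← mul_assoc (star U) U, h, one_mul]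
  map_zero' := by
    show U * 0 * star U = 0
    simp
  map_add' X Y := by
    show U * (X + Y) * star U = U * X * star U + U * Y * star U
    rw [mul_add, add_mul]
  commutes' r := by
    show U * (algebraMap ℝ (Matrix m m ℂ) r) * star U = algebraMap ℝ (Matrix m m ℂ) r
    rw [Algebra.algebraMap_eq_smul_one,
      mul_smul_comm, mul_one, smul_mul_assoc, Matrix.mem_unitaryGroup_iff.mp hU]

lemma aeval_conj (U : Matrix m m ℂ) (hU : U ∈ Matrix.unitaryGroup m ℂ) (c : m → ℝ) (p : ℝ[X]) :
    Polynomial.aeval (U * Matrix.diagonal (Complex.ofReal ∘ c) * star U) p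
      = U * Matrix.diagonal (Complex.ofReal ∘ fun i => p.eval (c i)) * star U := by
  have h1 : U * Matrix.diagonal (Complex.ofReal ∘ c) * star U
      = conjAH U hU (Matrix.diagonal (Complex.ofReal ∘ c)) := rfl
  rw [h1, Polynomial.aeval_algHom_apply]
  have h2 : Matrix.diagonal (Complex.ofReal ∘ c)
      = Matrix.diagonalAlgHom (R := ℝ) (n := m) (α := ℂ) (Complex.ofReal ∘ c) := rfl
  rw [h2, Polynomial.aeval_algHom_apply]
  have h3 : Polynomial.aeval (Complex.ofReal ∘ c) p
      = Complex.ofReal ∘ fun i => p.eval (c i) := by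
    funext i
    have h4 : (Polynomial.aeval (Complex.ofReal ∘ c) p) i
        = Polynomial.aeval (algebraMap ℝ ℂ (c i)) p :=
      (Polynomial.aeval_algHom_apply (Pi.evalAlgHom ℝ (fun _ => ℂ) i) _ p).symm
    rw [h4, Polynomial.aeval_algebraMap_apply_eq_algebraMap_eval]
    rfl
  rw [h3]
  rfl


variable {A : Matrix m m ℂ}

lemma cfc_congr (hA : A.IsHermitian) {f g : ℝ → ℝ}
    (h : ∀ i, f (hA.eigenvalues i) = g (hA.eigenvalues i)) : hA.cfc f = hA.cfc g := by
  have h2 : (RCLike.ofReal ∘ f ∘ hA.eigenvalues : m → ℂ) = RCLike.ofReal ∘ g ∘ hA.eigenvalues :=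
    funext fun i => congrArg _ (h i)
  unfold Matrix.IsHermitian.cfc
  rw [h2]

lemma cfc_aeval (hA : A.IsHermitian) (p : ℝ[X]) :
    hA.cfc (fun x => p.eval x) = Polynomial.aeval A p := by
  have h0 : A = (hA.eigenvectorUnitary : Matrix m m ℂ)
      * Matrix.diagonal (Complex.ofReal ∘ hA.eigenvalues)
      * star (hA.eigenvectorUnitary : Matrix m m ℂ) := hA.spectral_theorem
  conv_rhs => rw [h0]
  rw [aeval_conj _ (SetLike.coe_mem _) hA.eigenvalues p]
  rfl

lemma cfc_conj (hA : A.IsHermitian) (U : Matrix m m ℂ) (hU : U ∈ Matrix.unitaryGroup m ℂ)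
    (d : m → ℝ) (hd : A = U * Matrix.diagonal (Complex.ofReal ∘ d) * star U) (f : ℝ → ℝ) :
    hA.cfc f = U * Matrix.diagonal (Complex.ofReal ∘ f ∘ d) * star U := by
  obtain ⟨p, hp⟩ := exists_interp ((Finset.univ.image d) ∪ (Finset.univ.image hA.eigenvalues)) f
  have h1 : hA.cfc f = hA.cfc (fun x => p.eval x) :=
    (cfc_congr hA fun i =>
      hp _ (Finset.mem_union_right _ (Finset.mem_image_of_mem _ (Finset.mem_univ i)))).symm
  have h2 : (Complex.ofReal ∘ fun i => p.eval (d i)) = Complex.ofReal ∘ f ∘ d :=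
    funext fun i => congrArg _
      (hp _ (Finset.mem_union_left _ (Finset.mem_image_of_mem _ (Finset.mem_univ i))))
  rw [h1, cfc_aeval, hd, aeval_conj _ hU, h2]

lemma cfc_isHermitian (hA : A.IsHermitian) (f : ℝ → ℝ) : (hA.cfc f).IsHermitian := by
  have hD : star (Matrix.diagonal (RCLike.ofReal ∘ f ∘ hA.eigenvalues) : Matrix m m ℂ)
      = Matrix.diagonal (RCLike.ofReal ∘ f ∘ hA.eigenvalues) := by
    have h5 : (star (RCLike.ofReal ∘ f ∘ hA.eigenvalues) : m → ℂ)
        = RCLike.ofReal ∘ f ∘ hA.eigenvalues := by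
      funext i; simp [Pi.star_apply, RCLike.conj_ofReal]
    rw [Matrix.star_eq_conjTranspose, Matrix.diagonal_conjTranspose, h5]
  show _ᴴ = _
  rw [← Matrix.star_eq_conjTranspose]
  unfold Matrix.IsHermitian.cfc
  simp only [Unitary.conjStarAlgAut_apply]
  rw [StarMul.star_mul, StarMul.star_mul, star_star, hD, mul_assoc]

lemma cfc_mul (hA : A.IsHermitian) (f g : ℝ → ℝ) :
    hA.cfc f * hA.cfc g = hA.cfc fun x => f x * g x := by
  have h : star (hA.eigenvectorUnitary : Matrix m m ℂ) * (hA.eigenvectorUnitary : Matrix m m ℂ)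
      = 1 := Matrix.mem_unitaryGroup_iff'.mp (SetLike.coe_mem _)
  unfold Matrix.IsHermitian.cfc
  simp only [Unitary.conjStarAlgAut_apply]
  simp only [mul_assoc]
  rw [← mul_assoc (star (hA.eigenvectorUnitary : Matrix m m ℂ)), h, one_mul,
    ← mul_assoc (Matrix.diagonal _), Matrix.diagonal_mul_diagonal]
  have h3 : (fun i => ((RCLike.ofReal ∘ f ∘ hA.eigenvalues) i : ℂ)
      * (RCLike.ofReal ∘ g ∘ hA.eigenvalues) i)
      = RCLike.ofReal ∘ (fun x => f x * g x) ∘ hA.eigenvalues := by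
    funext i; simp
  rw [h3]

lemma cfc_id (hA : A.IsHermitian) : hA.cfc (fun x => x) = A := by
  conv_rhs => rw [hA.spectral_theorem]
  rfl


lemma conj_cancel {U X Y : Matrix m m ℂ} (hU : U ∈ Matrix.unitaryGroup m ℂ)
    (h : U * X * star U = U * Y * star U) : X = Y := by
  have h1 : star U * U = 1 := Matrix.mem_unitaryGroup_iff'.mp hU
  have e : ∀ Z : Matrix m m ℂ, star U * (U * Z * star U) * U = Z := by
    intro Z
    simp only [← mul_assoc]
    rw [h1, one_mul, mul_assoc, h1, mul_one]
  have h2 := congrArg (fun W => star U * W * U) h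
  simpa only [e] using h2

lemma cfc_log_of_idem {ρ : Matrix m m ℂ} (h : ρ.IsHermitian) (hid : ρ * ρ = ρ) :
    h.cfc Real.log = 0 := by
  set U : Matrix m m ℂ := (h.eigenvectorUnitary : Matrix m m ℂ) with hUdef
  have hU : U ∈ Matrix.unitaryGroup m ℂ := SetLike.coe_mem _
  have h1 : star U * U = 1 := Matrix.mem_unitaryGroup_iff'.mp hU
  set D : Matrix m m ℂ := Matrix.diagonal (Complex.ofReal ∘ h.eigenvalues) with hDdef
  have h0 : ρ = U * D * star U := h.spectral_theorem
  have hsq : U * (D * D) * star U = ρ := by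
    conv_rhs => rw [← hid]
    conv_rhs => rw [h0]
    simp only [mul_assoc]
    rw [← mul_assoc (star U) U, h1, one_mul]
  have hDD : D * D = D := conj_cancel hU (hsq.trans h0)
  rw [hDdef, Matrix.diagonal_mul_diagonal] at hDD
  have hev : ∀ i, h.eigenvalues i = 0 ∨ h.eigenvalues i = 1 := by
    intro i
    have h3 := Matrix.diagonal_eq_diagonal_iff.mp hDD i
    simp only [Function.comp_apply, ← Complex.ofReal_mul, Complex.ofReal_inj] at h3
    rcases mul_eq_zero.mp (by linarith [h3] : h.eigenvalues i * (h.eigenvalues i - 1) = 0) with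
      h4 | h4
    · exact Or.inl h4
    · exact Or.inr (by linarith)
  have hz : (RCLike.ofReal ∘ Real.log ∘ h.eigenvalues : m → ℂ) = fun _ => 0 := by
    funext i
    rcases hev i with h5 | h5 <;> simp [h5]
  unfold Matrix.IsHermitian.cfc
  simp only [Unitary.conjStarAlgAut_apply]
  rw [hz]
  have : (Matrix.diagonal (fun _ => 0) : Matrix m m ℂ) = 0 := by
    ext i j; by_cases hij : i = j <;> simp [Matrix.diagonal_apply, hij]
  rw [this, mul_zero, zero_mul]

variable {a b : Type*} [Fintype a] [DecidableEq a] [Fintype b] [DecidableEq b]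

lemma transpose_conjT (A : Matrix a b ℂ) : (Aᵀ)ᴴ = (Aᴴ)ᵀ := by
  ext i j; simp

lemma pow_intertwine (M : Matrix a b ℂ) (k : ℕ) : (M * Mᴴ) ^ k * M = M * (Mᴴ * M) ^ k := by
  induction k with
  | zero => simp
  | succ k ih =>
      calc (M * Mᴴ) ^ (k + 1) * M = ((M * Mᴴ) ^ k * M) * (Mᴴ * M) := by
            rw [pow_succ]; simp only [Matrix.mul_assoc]
        _ = M * ((Mᴴ * M) ^ k * (Mᴴ * M)) := by rw [ih]; simp only [Matrix.mul_assoc]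
        _ = M * (Mᴴ * M) ^ (k + 1) := by rw [← pow_succ]

lemma aeval_intertwine (M : Matrix a b ℂ) (p : ℝ[X]) :
    Polynomial.aeval (M * Mᴴ) p * M = M * Polynomial.aeval (Mᴴ * M) p := by
  induction p using Polynomial.induction_on' with
  | add p q hp hq => rw [map_add, map_add, Matrix.add_mul, Matrix.mul_add, hp, hq]
  | monomial k t =>
      rw [Polynomial.aeval_monomial, Polynomial.aeval_monomial,
        Algebra.algebraMap_eq_smul_one, Algebra.algebraMap_eq_smul_one,
        smul_mul_assoc, one_mul, smul_mul_assoc, one_mul,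
        Matrix.smul_mul, Matrix.mul_smul, pow_intertwine]

lemma cfc_intertwine (M : Matrix a b ℂ) (f : ℝ → ℝ)
    (h1 : (M * Mᴴ).IsHermitian) (h2 : (Mᴴ * M).IsHermitian) :
    h1.cfc f * M = M * h2.cfc f := by
  obtain ⟨p, hp⟩ := exists_interp
    ((Finset.univ.image h1.eigenvalues) ∪ (Finset.univ.image h2.eigenvalues)) f
  have e1 : h1.cfc f = h1.cfc (fun x => p.eval x) :=
    (cfc_congr h1 fun i =>
      hp _ (Finset.mem_union_left _ (Finset.mem_image_of_mem _ (Finset.mem_univ i)))).symm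
  have e2 : h2.cfc f = h2.cfc (fun x => p.eval x) :=
    (cfc_congr h2 fun i =>
      hp _ (Finset.mem_union_right _ (Finset.mem_image_of_mem _ (Finset.mem_univ i)))).symm
  rw [e1, e2, cfc_aeval, cfc_aeval, aeval_intertwine]

lemma mul_cfc_sgn (M : Matrix a b ℂ) (h2 : (Mᴴ * M).IsHermitian) : M * h2.cfc sgn = M := by
  set P := h2.cfc sgn with hP
  have hPh : Pᴴ = P := cfc_isHermitian h2 sgn
  have hid : ∀ g : ℝ → ℝ, (∀ x, g x = x) → h2.cfc g = Mᴴ * M := by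
    intro g hg
    have hgg : g = fun x => x := funext hg
    rw [hgg, cfc_id]
  have c1 : (Mᴴ * M) * P = Mᴴ * M := by
    conv_lhs => rw [← cfc_id h2]
    rw [hP, cfc_mul]
    exact hid _ mul_sgn
  have c2 : P * (Mᴴ * M) = Mᴴ * M := by
    conv_lhs => rw [← cfc_id h2]
    rw [hP, cfc_mul]
    exact hid _ fun x => by rw [mul_comm]; exact mul_sgn x
  have key : (M * P - M)ᴴ * (M * P - M) = 0 := by
    rw [Matrix.conjTranspose_sub, Matrix.conjTranspose_mul, hPh]
    rw [Matrix.sub_mul, Matrix.mul_sub, Matrix.mul_sub]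
    have d1 : P * Mᴴ * (M * P) = Mᴴ * M := by
      rw [Matrix.mul_assoc, ← Matrix.mul_assoc Mᴴ M P, c1, c2]
    have d2 : P * Mᴴ * M = Mᴴ * M := by
      rw [Matrix.mul_assoc, c2]
    have d3 : Mᴴ * (M * P) = Mᴴ * M := by
      rw [← Matrix.mul_assoc, c1]
    rw [d1, d2, d3]
    simp
  exact sub_eq_zero.mp (Matrix.conjTranspose_mul_self_eq_zero.mp key)

lemma cfc_transpose {A : Matrix m m ℂ} (hA : A.IsHermitian) (hT : (Aᵀ).IsHermitian) (f : ℝ → ℝ) :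
    hT.cfc f = (hA.cfc f)ᵀ := by
  set U : Matrix m m ℂ := (hA.eigenvectorUnitary : Matrix m m ℂ) with hUdef
  have hU : U ∈ Matrix.unitaryGroup m ℂ := SetLike.coe_mem _
  set V : Matrix m m ℂ := (Uᴴ)ᵀ with hVdef
  have hsV : star V = Uᵀ := by
    rw [hVdef, Matrix.star_eq_conjTranspose, transpose_conjT, Matrix.conjTranspose_conjTranspose]
  have hV : V ∈ Matrix.unitaryGroup m ℂ := by
    rw [Matrix.mem_unitaryGroup_iff, hsV, hVdef, ← Matrix.transpose_mul, ←
      Matrix.star_eq_conjTranspose, Matrix.mem_unitaryGroup_iff.mp hU, Matrix.transpose_one]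
  have hdec : Aᵀ = V * Matrix.diagonal (Complex.ofReal ∘ hA.eigenvalues) * star V := by
    have h0 : A = U * Matrix.diagonal (Complex.ofReal ∘ hA.eigenvalues) * star U :=
      hA.spectral_theorem
    conv_lhs => rw [h0]
    rw [Matrix.transpose_mul, Matrix.transpose_mul, Matrix.diagonal_transpose, hsV,
      Matrix.star_eq_conjTranspose U, hVdef]
    simp only [mul_assoc]
  rw [cfc_conj hT V hV hA.eigenvalues hdec f]
  have hcf : hA.cfc f
      = U * Matrix.diagonal (Complex.ofReal ∘ f ∘ hA.eigenvalues) * star U := rfl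
  rw [hcf, Matrix.transpose_mul, Matrix.transpose_mul, Matrix.diagonal_transpose, hsV,
    Matrix.star_eq_conjTranspose U, hVdef]
  simp only [mul_assoc]

lemma kron_conjTranspose (X : Matrix a a ℂ) (Y : Matrix b b ℂ) :
    (X ⊗ₖ Y)ᴴ = Xᴴ ⊗ₖ Yᴴ := by
  ext p q
  obtain ⟨i, j⟩ := p
  obtain ⟨k, l⟩ := q
  simp [Matrix.conjTranspose_apply, star_mul']

lemma kron_unitary {U : Matrix a a ℂ} {V : Matrix b b ℂ}
    (hU : U ∈ Matrix.unitaryGroup a ℂ) (hV : V ∈ Matrix.unitaryGroup b ℂ) :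
    U ⊗ₖ V ∈ Matrix.unitaryGroup (a × b) ℂ := by
  rw [Matrix.mem_unitaryGroup_iff] at hU hV ⊢
  rw [Matrix.star_eq_conjTranspose, kron_conjTranspose, ← Matrix.mul_kronecker_mul,
    ← Matrix.star_eq_conjTranspose U, ← Matrix.star_eq_conjTranspose V, hU, hV,
    Matrix.one_kronecker_one]

lemma cfc_kron_log {X : Matrix a a ℂ} {Y : Matrix b b ℂ}
    (hX : X.IsHermitian) (hY : Y.IsHermitian) (hK : (X ⊗ₖ Y).IsHermitian) :
    hK.cfc Real.log
      = hX.cfc Real.log ⊗ₖ hY.cfc sgn + hX.cfc sgn ⊗ₖ hY.cfc Real.log := by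
  set U : Matrix a a ℂ := (hX.eigenvectorUnitary : Matrix a a ℂ) with hUdef
  set V : Matrix b b ℂ := (hY.eigenvectorUnitary : Matrix b b ℂ) with hVdef
  have hU : U ∈ Matrix.unitaryGroup a ℂ := SetLike.coe_mem _
  have hV : V ∈ Matrix.unitaryGroup b ℂ := SetLike.coe_mem _
  have hW : U ⊗ₖ V ∈ Matrix.unitaryGroup (a × b) ℂ := kron_unitary hU hV
  have hsW : star (U ⊗ₖ V) = star U ⊗ₖ star V := by
    rw [Matrix.star_eq_conjTranspose, kron_conjTranspose, Matrix.star_eq_conjTranspose,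
      Matrix.star_eq_conjTranspose V]
  set d : a × b → ℝ := fun p => hX.eigenvalues p.1 * hY.eigenvalues p.2 with hd
  have hkd : ∀ g1 g2 : ℝ → ℝ,
      (Matrix.diagonal (Complex.ofReal ∘ g1 ∘ hX.eigenvalues) ⊗ₖ
        Matrix.diagonal (Complex.ofReal ∘ g2 ∘ hY.eigenvalues))
      = Matrix.diagonal (fun p : a × b =>
          (Complex.ofReal (g1 (hX.eigenvalues p.1)) * Complex.ofReal (g2 (hY.eigenvalues p.2)))) := by
    intro g1 g2
    rw [Matrix.diagonal_kronecker_diagonal]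
    rfl
  have hdec : X ⊗ₖ Y
      = (U ⊗ₖ V) * Matrix.diagonal (Complex.ofReal ∘ d) * star (U ⊗ₖ V) := by
    have hx : X = U * Matrix.diagonal (Complex.ofReal ∘ hX.eigenvalues) * star U :=
      hX.spectral_theorem
    have hy : Y = V * Matrix.diagonal (Complex.ofReal ∘ hY.eigenvalues) * star V :=
      hY.spectral_theorem
    conv_lhs => rw [hx, hy]
    rw [Matrix.mul_kronecker_mul, Matrix.mul_kronecker_mul, hsW,
      Matrix.diagonal_kronecker_diagonal]
    have he : (Complex.ofReal ∘ d) = fun mn : a × b =>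
        (Complex.ofReal ∘ hX.eigenvalues) mn.1 * (Complex.ofReal ∘ hY.eigenvalues) mn.2 := by
      funext p; simp [hd]
    rw [he]
  rw [cfc_conj hK (U ⊗ₖ V) hW d hdec Real.log]
  have hterm : ∀ g1 g2 : ℝ → ℝ, hX.cfc g1 ⊗ₖ hY.cfc g2
      = (U ⊗ₖ V) * Matrix.diagonal (fun p : a × b =>
          (Complex.ofReal (g1 (hX.eigenvalues p.1)) * Complex.ofReal (g2 (hY.eigenvalues p.2))))
        * star (U ⊗ₖ V) := by
    intro g1 g2
    have hc1 : hX.cfc g1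
        = U * Matrix.diagonal (Complex.ofReal ∘ g1 ∘ hX.eigenvalues) * star U := rfl
    have hc2 : hY.cfc g2
        = V * Matrix.diagonal (Complex.ofReal ∘ g2 ∘ hY.eigenvalues) * star V := rfl
    rw [hc1, hc2, Matrix.mul_kronecker_mul, Matrix.mul_kronecker_mul, hsW, hkd]
  rw [hterm, hterm, ← Matrix.add_mul, ← Matrix.mul_add, Matrix.diagonal_add]
  have hfun : (Complex.ofReal ∘ Real.log ∘ d)
      = fun p : a × b => (Real.log (hX.eigenvalues p.1) : ℂ) * (sgn (hY.eigenvalues p.2) : ℂ)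
          + (sgn (hX.eigenvalues p.1) : ℂ) * (Real.log (hY.eigenvalues p.2) : ℂ) := by
    funext p
    show (Real.log (hX.eigenvalues p.1 * hY.eigenvalues p.2) : ℂ) = _
    rw [log_mul_sgn]
    push_cast
    ring
  rw [hfun]


lemma kron_mulVec {A B : Type*} [Fintype A] [Fintype B]
    (X : Matrix A A ℂ) (Y : Matrix B B ℂ) (w : A × B → ℂ) (p : A × B) :
    ((X ⊗ₖ Y) *ᵥ w) p = (X * (Matrix.of fun i j => w (i, j)) * Yᵀ) p.1 p.2 := by
  obtain ⟨i, j⟩ := p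
  simp only [Matrix.mulVec, dotProduct, Matrix.mul_apply, Matrix.kroneckerMap_apply,
    Matrix.transpose_apply, Matrix.of_apply, Fintype.sum_prod_type]
  rw [Finset.sum_comm]
  refine Finset.sum_congr rfl fun b' _ => ?_
  rw [Finset.sum_mul]
  refine Finset.sum_congr rfl fun a' _ => ?_
  ring

lemma trace_outer_mul {ι : Type*} [Fintype ι] (v : ι → ℂ) (Z : Matrix ι ι ℂ) :
    (Matrix.vecMulVec v (star v) * Z).trace = ∑ y, star (v y) * (Z *ᵥ v) y := by
  simp only [Matrix.trace, Matrix.diag, Matrix.mul_apply, Matrix.vecMulVec_apply,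
    Matrix.mulVec, dotProduct, Pi.star_apply, Finset.mul_sum]
  rw [Finset.sum_comm]
  refine Finset.sum_congr rfl fun y _ => Finset.sum_congr rfl fun x _ => ?_
  ring

lemma sum_star_entry {A B : Type*} [Fintype A] [Fintype B] (M N : Matrix A B ℂ) :
    (∑ p : A × B, star (M p.1 p.2) * N p.1 p.2) = (N * Mᴴ).trace := by
  simp only [Matrix.trace, Matrix.diag, Matrix.mul_apply, Matrix.conjTranspose_apply,
    Fintype.sum_prod_type]
  refine Finset.sum_congr rfl fun a _ => Finset.sum_congr rfl fun b0 _ => ?_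
  ring

end Stmt6Aux


theorem stmt_6 {A B : Type*} [Fintype A] [DecidableEq A] [Fintype B] [DecidableEq B]
    (ρ : Matrix (A × B) (A × B) ℂ) (hρ : IsDensity ρ)
    (hpure : ∃ v : A × B → ℂ, ρ = Matrix.vecMulVec v (star v)) :
    relVar ρ (ptraceB ρ ⊗ₖ ptraceA ρ) = 4 * varentropy (ptraceB ρ) := by
  obtain ⟨v, hv⟩ := hpure
  set M : Matrix A B ℂ := Matrix.of (fun a b => v (a, b)) with hM
  have hherm : ρ.IsHermitian := hρ.1.1
  have hA_eq : ptraceB ρ = M * Mᴴ := by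
    ext a a'
    simp [ptraceB, hv, Matrix.vecMulVec_apply, Matrix.mul_apply, Matrix.conjTranspose_apply, hM]
  have hB_eq : ptraceA ρ = (Mᴴ * M)ᵀ := by
    ext b0 b1
    simp only [ptraceA, hv, Matrix.vecMulVec_apply, Matrix.mul_apply,
      Matrix.conjTranspose_apply, Matrix.transpose_apply, Matrix.of_apply, hM]
    exact Finset.sum_congr rfl fun a _ => by simp [Pi.star_apply, mul_comm]
  have h1 : (M * Mᴴ).IsHermitian := Matrix.isHermitian_mul_conjTranspose_self M
  have h2 : (Mᴴ * M).IsHermitian := Matrix.isHermitian_conjTranspose_mul_self M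
  have hB1 : ((Mᴴ * M)ᵀ).IsHermitian := h2.transpose
  have hσ : ((M * Mᴴ) ⊗ₖ (Mᴴ * M)ᵀ).IsHermitian := by
    show _ᴴ = _
    rw [Stmt6Aux.kron_conjTranspose, h1.eq, hB1.eq]
  set K : Matrix A A ℂ := h1.cfc Real.log with hK
  set S : Matrix A A ℂ := h1.cfc Stmt6Aux.sgn with hS
  set K' : Matrix B B ℂ := hB1.cfc Real.log with hK'
  set S' : Matrix B B ℂ := hB1.cfc Stmt6Aux.sgn with hS'
  -- idempotence of the pure state
  have htr : (∑ z, star (v z) * v z) = 1 := by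
    have h3 := hρ.2
    rw [hv] at h3
    simp only [Matrix.trace, Matrix.diag, Matrix.vecMulVec_apply, Pi.star_apply] at h3
    rw [← h3]
    exact Finset.sum_congr rfl fun z _ => by ring
  have hidem : ρ * ρ = ρ := by
    rw [hv]
    ext x y
    simp only [Matrix.mul_apply, Matrix.vecMulVec_apply, Pi.star_apply]
    calc ∑ z, v x * star (v z) * (v z * star (v y))
        = (v x * star (v y)) * ∑ z, star (v z) * v z := by
          rw [Finset.mul_sum]
          exact Finset.sum_congr rfl fun z _ => by ring
      _ = v x * star (v y) := by rw [htr, mul_one]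
  have hmlogρ : mlog ρ = 0 := by
    unfold mlog
    rw [dif_pos hherm]
    exact Stmt6Aux.cfc_log_of_idem hherm hidem
  have hmlogσ : mlog ((M * Mᴴ) ⊗ₖ (Mᴴ * M)ᵀ) = K ⊗ₖ S' + S ⊗ₖ K' := by
    unfold mlog
    rw [dif_pos hσ]
    exact Stmt6Aux.cfc_kron_log h1 hB1 hσ
  have hmlogA : mlog (M * Mᴴ) = K := by
    unfold mlog
    rw [dif_pos h1]
  -- transposes
  have hS't : S'ᵀ = h2.cfc Stmt6Aux.sgn := by
    rw [hS', Stmt6Aux.cfc_transpose h2 hB1, Matrix.transpose_transpose]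
  have hK't : K'ᵀ = h2.cfc Real.log := by
    rw [hK', Stmt6Aux.cfc_transpose h2 hB1, Matrix.transpose_transpose]
  have hMsgn : M * h2.cfc Stmt6Aux.sgn = M := Stmt6Aux.mul_cfc_sgn M h2
  have hMlog : M * h2.cfc Real.log = K * M :=
    (Stmt6Aux.cfc_intertwine M Real.log h1 h2).symm
  have hSK : S * K = K := by
    rw [hS, hK, Stmt6Aux.cfc_mul]
    have hf : (fun x => Stmt6Aux.sgn x * Real.log x) = Real.log :=
      funext Stmt6Aux.sgn_mul_log
    rw [hf]
  have hofM : (Matrix.of fun i j => v (i, j)) = M := rfl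
  have hLv : ∀ p, ((K ⊗ₖ S' + S ⊗ₖ K') *ᵥ v) p = 2 * (K * M) p.1 p.2 := by
    intro p
    rw [Matrix.add_mulVec, Pi.add_apply, Stmt6Aux.kron_mulVec, Stmt6Aux.kron_mulVec, hofM]
    have e1 : K * M * S'ᵀ = K * M := by rw [hS't, Matrix.mul_assoc, hMsgn]
    have e2 : S * M * K'ᵀ = K * M := by
      rw [hK't, Matrix.mul_assoc, hMlog, ← Matrix.mul_assoc, hSK]
    rw [e1, e2]
    ring
  have hL2v : ∀ p, (((K ⊗ₖ S' + S ⊗ₖ K') * (K ⊗ₖ S' + S ⊗ₖ K')) *ᵥ v) p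
      = 4 * (K * (K * M)) p.1 p.2 := by
    intro p
    rw [← Matrix.mulVec_mulVec, Matrix.add_mulVec, Pi.add_apply,
      Stmt6Aux.kron_mulVec, Stmt6Aux.kron_mulVec]
    have hof2 : (Matrix.of fun i j => ((K ⊗ₖ S' + S ⊗ₖ K') *ᵥ v) (i, j))
        = (2 : ℂ) • (K * M) := by
      ext i j
      rw [Matrix.of_apply, hLv (i, j)]
      simp [smul_eq_mul]
    rw [hof2]
    have e1 : K * ((2 : ℂ) • (K * M)) * S'ᵀ = (2 : ℂ) • (K * (K * M)) := by
      rw [hS't, Matrix.mul_smul, Matrix.smul_mul, Matrix.mul_assoc, Matrix.mul_assoc, hMsgn]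
    have e2 : S * ((2 : ℂ) • (K * M)) * K'ᵀ = (2 : ℂ) • (K * (K * M)) := by
      rw [hK't, Matrix.mul_smul, Matrix.smul_mul, Matrix.mul_assoc, Matrix.mul_assoc, hMlog,
        ← Matrix.mul_assoc S K (K * M), hSK]
    rw [e1, e2]
    simp [smul_eq_mul]
    ring
  have hstarv : ∀ y : A × B, star (v y) = star (M y.1 y.2) := fun y => rfl
  have tL : (ρ * (K ⊗ₖ S' + S ⊗ₖ K')).trace = 2 * ((M * Mᴴ) * K).trace := by
    rw [hv, Stmt6Aux.trace_outer_mul]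
    have hsum : (∑ y, star (v y) * ((K ⊗ₖ S' + S ⊗ₖ K') *ᵥ v) y)
        = 2 * ∑ p : A × B, star (M p.1 p.2) * (K * M) p.1 p.2 := by
      rw [Finset.mul_sum]
      refine Finset.sum_congr rfl fun y _ => ?_
      rw [hLv y, hstarv y]
      ring
    rw [hsum, Stmt6Aux.sum_star_entry M (K * M), Matrix.mul_assoc,
      Matrix.trace_mul_comm]
  have tL2 : (ρ * ((K ⊗ₖ S' + S ⊗ₖ K') * (K ⊗ₖ S' + S ⊗ₖ K'))).trace
      = 4 * ((M * Mᴴ) * (K * K)).trace := by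
    rw [hv, Stmt6Aux.trace_outer_mul]
    have hsum : (∑ y, star (v y) * (((K ⊗ₖ S' + S ⊗ₖ K') * (K ⊗ₖ S' + S ⊗ₖ K')) *ᵥ v) y)
        = 4 * ∑ p : A × B, star (M p.1 p.2) * (K * (K * M)) p.1 p.2 := by
      rw [Finset.mul_sum]
      refine Finset.sum_congr rfl fun y _ => ?_
      rw [hL2v y, hstarv y]
      ring
    rw [hsum, Stmt6Aux.sum_star_entry M (K * (K * M)), ← Matrix.mul_assoc K K M,
      Matrix.mul_assoc (K * K) M Mᴴ, Matrix.trace_mul_comm]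
  -- final assembly
  rw [hA_eq, hB_eq]
  rw [relVar, relEnt, varentropy, hmlogρ, hmlogσ, hmlogA]
  rw [zero_sub, neg_sq, pow_two, pow_two, Matrix.mul_neg, Matrix.trace_neg]
  rw [tL2, tL]
  simp only [Complex.mul_re, Complex.neg_re, Complex.neg_im]
  norm_num
  rw [show K ^ 2 = K * K from pow_two K]
  ring
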